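/- arXiv:1801.04481 — 2 statements merged into one kernel-verified Lean document; each statement's English description precedes it below -/
import Mathlib

section
/- Let n ≥ 1, k ≥ 2 be integers and let F ∈ ℤ[x_1,…,x_n] be a polynomial of total degree d ≥ 2 such that for every prime p there exists (m_1,…,m_n) ∈ ℤ^n with p^k ∤ F(m_1,…,m_n). For B ≥ 3 set ξ_1 = ξ_1(B) = (log B)/(nk) and define N_1(B) to be the number of x ∈ ℤ^n with |x_i| ≤ B for all i such that p^k ∤ F(x) for every prime p ≤ ξ_1. Then as B → ∞, N_1(B)/(2⌊B⌋+1)^n converges to C_{F,k} = ∏_p (1 − ρ_F(p^k)/p^{kn}). -/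
open MvPolynomial Filter

/-- `ρ_F(m)`: the number of `a ∈ (ℤ/mℤ)^n` with `F(a) ≡ 0 (mod m)`. -/
noncomputable def rhoF {n : ℕ} (F : MvPolynomial (Fin n) ℤ) (m : ℕ) : ℕ :=
  Nat.card {a : Fin n → ZMod m // aeval a F = 0}

/-- `N_1(B)`: number of integer points in the box `|x_i| ≤ B` such that `F(x)` is not
divisible by `p^k` for any prime `p ≤ ξ₁(B) = (log B)/(nk)`. -/
noncomputable def NOneCount {n : ℕ} (F : MvPolynomial (Fin n) ℤ) (k : ℕ) (B : ℝ) : ℕ :=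
  Set.ncard {x : Fin n → ℤ | (∀ i, |(x i : ℝ)| ≤ B) ∧
    ∀ p : ℕ, p.Prime → (p : ℝ) ≤ Real.log B / (n * k) → ¬ ((p : ℤ) ^ k ∣ eval x F)}

namespace N1Proof

variable {n k : ℕ}

/-- casting eval to `ZMod N`. -/
lemma aeval_cast (F : MvPolynomial (Fin n) ℤ) (N : ℕ) (x : Fin n → ℤ) :
    aeval (fun i => ((x i : ZMod N))) F = ((eval x F : ℤ) : ZMod N) := by
  have h := MvPolynomial.eval₂_comp_left (Int.castRingHom (ZMod N)) (RingHom.id ℤ) x F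
  rw [MvPolynomial.aeval_def, algebraMap_int_eq]
  rw [show eval x F = eval₂ (RingHom.id ℤ) x F from rfl]
  rw [show ((eval₂ (RingHom.id ℤ) x F : ℤ) : ZMod N)
      = (Int.castRingHom (ZMod N)) (eval₂ (RingHom.id ℤ) x F) from rfl, h]
  simp [RingHom.comp_id]
  rfl

/-- divisibility is a condition on residues -/
lemma dvd_iff_cast (F : MvPolynomial (Fin n) ℤ) (N : ℕ) (x : Fin n → ℤ) :
    ((N : ℤ) ∣ eval x F) ↔ aeval (fun i => ((x i : ZMod N))) F = 0 := by
  rw [aeval_cast, ZMod.intCast_zmod_eq_zero_iff_dvd]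

end N1Proof
namespace N1Proof

variable {n k : ℕ}

open Finset in
/-- abstract CRT counting lemma -/
lemma crt_card {ι : Type} [Fintype ι] (a : ι → ℕ)
    (hcop : Pairwise (Function.onFun Nat.Coprime a)) (M : ℕ) (hM : M = ∏ i, a i)
    (φ : ∀ i, ZMod M →+* ZMod (a i)) (P : ∀ i, (Fin n → ZMod (a i)) → Prop) :
    Nat.card {x : Fin n → ZMod M // ∀ i, P i (fun j => φ i (x j))}
      = ∏ i, Nat.card {y : Fin n → ZMod (a i) // P i y} := by
  subst hM
  let e : ZMod (∏ i, a i) ≃+* Π i, ZMod (a i) := ZMod.prodEquivPi a hcop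
  have hφ : ∀ i x, φ i x = e x i := by
    intro i x
    have : φ i = (Pi.evalRingHom (fun i => ZMod (a i)) i).comp
        (e : ZMod (∏ i, a i) →+* Π i, ZMod (a i)) := RingHom.ext_zmod _ _
    rw [this]; rfl
  have E : {x : Fin n → ZMod (∏ i, a i) // ∀ i, P i (fun j => φ i (x j))}
      ≃ Π i, {y : Fin n → ZMod (a i) // P i y} := by
    refine (Equiv.subtypeEquiv
      ((Equiv.piCongrRight fun _ => e.toEquiv).trans
        (Equiv.piComm (fun (_ : Fin n) i => ZMod (a i)))) ?_).trans
      (Equiv.subtypePiEquivPi)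
    intro x
    have key : ∀ i, (fun j => φ i (x j))
        = (((Equiv.piCongrRight fun _ => e.toEquiv).trans
            (Equiv.piComm (fun (_ : Fin n) i => ZMod (a i)))) x i) := by
      intro i; funext j; rw [hφ]; rfl
    constructor
    · intro h i; rw [← key]; exact h i
    · intro h i; rw [key]; exact h i
  rw [Nat.card_congr E, Nat.card_pi]

/-- count of non-roots mod N -/
lemma card_nonroot (F : MvPolynomial (Fin n) ℤ) (N : ℕ) [NeZero N] :
    Nat.card {y : Fin n → ZMod N // aeval y F ≠ 0} = N ^ n - rhoF F N := by
  classical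
  rw [rhoF, Nat.card_eq_fintype_card, Nat.card_eq_fintype_card]
  have := Fintype.card_subtype_compl (fun y : Fin n → ZMod N => aeval y F = 0)
  simp only [ne_eq]
  rw [this, Fintype.card_fun, ZMod.card, Fintype.card_fin]

end N1Proof
namespace N1Proof

variable {n : ℕ} (k : ℕ)

/-- modulus -/
def MS (S : Finset Nat.Primes) : ℕ := ∏ q ∈ S, (q : ℕ) ^ k

lemma MS_pos (S : Finset Nat.Primes) : 0 < MS k S :=
  Finset.prod_pos fun q _ => pow_pos q.2.pos k

lemma dvd_MS {S : Finset Nat.Primes} {q : Nat.Primes} (hq : q ∈ S) :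
    (q : ℕ) ^ k ∣ MS k S := Finset.dvd_prod_of_mem _ hq

lemma card_res (F : MvPolynomial (Fin n) ℤ) (S : Finset Nat.Primes) :
    Nat.card {x : Fin n → ZMod (MS k S) // ∀ q : Nat.Primes, ∀ hq : q ∈ S,
        aeval (fun j => ZMod.castHom (dvd_MS k hq) (ZMod ((q : ℕ) ^ k)) (x j)) F ≠ 0}
      = ∏ q ∈ S, ((q : ℕ) ^ (k * n) - rhoF F ((q : ℕ) ^ k)) := by
  have h1 : Nat.card {x : Fin n → ZMod (MS k S) // ∀ i : {q : Nat.Primes // q ∈ S},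
      aeval (fun j => ZMod.castHom (dvd_MS k i.2) (ZMod ((i.1 : ℕ) ^ k)) (x j)) F ≠ 0}
      = ∏ i : {q : Nat.Primes // q ∈ S},
          Nat.card {y : Fin n → ZMod ((i.1 : ℕ) ^ k) // aeval y F ≠ 0} := by
    exact crt_card (fun i : {q : Nat.Primes // q ∈ S} => ((i.1 : ℕ)) ^ k)
      (fun i j hij => by
        have := (Nat.coprime_primes i.1.2 j.1.2).mpr
          (fun h => hij (Subtype.ext (Nat.Primes.coe_nat_injective h)))
        exact Nat.Coprime.pow _ _ this)
      (MS k S) (Finset.prod_coe_sort S (fun q : Nat.Primes => (q : ℕ) ^ k)).symm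
      (fun i => ZMod.castHom (dvd_MS k i.2) (ZMod ((i.1 : ℕ) ^ k)))
      (fun i y => aeval y F ≠ 0)
  have h2 : ∀ i : {q : Nat.Primes // q ∈ S},
      Nat.card {y : Fin n → ZMod ((i.1 : ℕ) ^ k) // aeval y F ≠ 0}
        = ((i.1 : ℕ) ^ (k * n) - rhoF F ((i.1 : ℕ) ^ k)) := by
    intro i
    haveI : NeZero ((i.1 : ℕ) ^ k) := ⟨(pow_pos i.1.2.pos k).ne'⟩
    rw [card_nonroot, ← pow_mul]
  calc Nat.card {x : Fin n → ZMod (MS k S) // ∀ q : Nat.Primes, ∀ hq : q ∈ S,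
        aeval (fun j => ZMod.castHom (dvd_MS k hq) (ZMod ((q : ℕ) ^ k)) (x j)) F ≠ 0}
      = Nat.card {x : Fin n → ZMod (MS k S) // ∀ i : {q : Nat.Primes // q ∈ S},
          aeval (fun j => ZMod.castHom (dvd_MS k i.2) (ZMod ((i.1 : ℕ) ^ k)) (x j)) F ≠ 0} := by
        apply Nat.card_congr
        apply Equiv.subtypeEquivRight
        intro x
        constructor
        · intro h i; exact h i.1 i.2
        · intro h q hq; exact h ⟨q, hq⟩
    _ = ∏ i : {q : Nat.Primes // q ∈ S},
          Nat.card {y : Fin n → ZMod ((i.1 : ℕ) ^ k) // aeval y F ≠ 0} := h1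
    _ = ∏ i : {q : Nat.Primes // q ∈ S}, ((i.1 : ℕ) ^ (k * n) - rhoF F ((i.1 : ℕ) ^ k)) := by
        exact Finset.prod_congr rfl fun i _ => h2 i
    _ = ∏ q ∈ S, ((q : ℕ) ^ (k * n) - rhoF F ((q : ℕ) ^ k)) :=
        Finset.prod_coe_sort S (fun q : Nat.Primes => ((q : ℕ) ^ (k * n) - rhoF F ((q : ℕ) ^ k)))

end N1Proof
namespace N1Proof

lemma one_dim (m : ℕ) (hm : 0 < m) (b : ℤ) (hb : 0 ≤ b) (r : ZMod m) :
    ((2*(b:ℝ)+1)/m - 1 ≤ (((Finset.Icc (-b) b).filter (fun x : ℤ => (x : ZMod m) = r)).card : ℝ)) ∧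
    ((((Finset.Icc (-b) b).filter (fun x : ℤ => (x : ZMod m) = r)).card : ℝ) ≤ (2*(b:ℝ)+1)/m + 1) := by
  haveI : NeZero m := ⟨hm.ne'⟩
  set v : ℤ := (r.val : ℤ) with hv
  have hvr : ((v : ZMod m)) = r := by
    rw [hv]; push_cast; exact ZMod.natCast_zmod_val r
  have hIcc : Finset.Icc (-b) b = Finset.Ioc (-b-1) b := by
    ext x; simp only [Finset.mem_Icc, Finset.mem_Ioc]; omega
  have hfilter : (Finset.Icc (-b) b).filter (fun x : ℤ => (x : ZMod m) = r)
      = (Finset.Ioc (-b-1) b).filter (fun x : ℤ => x ≡ v [ZMOD (m:ℕ)]) := by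
    rw [hIcc]
    apply Finset.filter_congr
    intro x _
    rw [← hvr, ZMod.intCast_eq_intCast_iff]
  have hm' : (0:ℤ) < (m:ℤ) := by exact_mod_cast hm
  have hcard := Int.Ioc_filter_modEq_card (-b-1) b hm' v
  have hmQ : (0:ℚ) < (m:ℚ) := by exact_mod_cast hm
  set X : ℚ := ((b:ℚ) - ((v:ℤ):ℚ))/(((m:ℤ)) : ℚ) with hX
  set Y : ℚ := (((-b-1 : ℤ):ℚ) - ((v:ℤ):ℚ))/(((m:ℤ)) : ℚ) with hY
  have hXY : X - Y = (2*(b:ℚ)+1)/(m:ℚ) := by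
    rw [hX, hY, div_sub_div_same]
    have : ((b:ℚ) - ((v:ℤ):ℚ)) - ((((-b-1 : ℤ):ℚ)) - ((v:ℤ):ℚ)) = 2*(b:ℚ)+1 := by
      push_cast; ring
    rw [this]
    norm_cast
  have hcard' : ((((Finset.Icc (-b) b).filter (fun x : ℤ => (x : ZMod m) = r)).card : ℤ))
      = max (⌊X⌋ - ⌊Y⌋) 0 := by
    rw [hfilter]
    rw [hX, hY]
    exact hcard
  have hD1 : (⌊X⌋ - ⌊Y⌋ : ℚ) ≥ X - Y - 1 := by
    have := Int.sub_one_lt_floor X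
    have := Int.floor_le Y
    push_cast at *
    linarith
  have hD2 : (⌊X⌋ - ⌊Y⌋ : ℚ) ≤ X - Y + 1 := by
    have := Int.floor_le X
    have := Int.sub_one_lt_floor Y
    push_cast at *
    linarith
  have hQ : ((((Finset.Icc (-b) b).filter (fun x : ℤ => (x : ZMod m) = r)).card : ℚ)
        ≥ (2*(b:ℚ)+1)/(m:ℚ) - 1)
      ∧ ((((Finset.Icc (-b) b).filter (fun x : ℤ => (x : ZMod m) = r)).card : ℚ)
        ≤ (2*(b:ℚ)+1)/(m:ℚ) + 1) := by
    have hcast : ((((Finset.Icc (-b) b).filter (fun x : ℤ => (x : ZMod m) = r)).card : ℚ))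
        = ((max (⌊X⌋ - ⌊Y⌋) 0 : ℤ) : ℚ) := by exact_mod_cast hcard'
    rw [hcast]
    have hmax1 : ((max (⌊X⌋ - ⌊Y⌋) 0 : ℤ) : ℚ) ≥ (⌊X⌋ - ⌊Y⌋ : ℚ) := by
      push_cast; exact_mod_cast le_max_left _ _
    have hnn : (0:ℚ) ≤ (2*(b:ℚ)+1)/(m:ℚ) := by positivity
    have hmax2 : ((max (⌊X⌋ - ⌊Y⌋) 0 : ℤ) : ℚ) ≤ max ((⌊X⌋ - ⌊Y⌋ : ℚ)) 0 := by
      push_cast; simp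
    constructor
    · calc (2*(b:ℚ)+1)/(m:ℚ) - 1 = X - Y - 1 := by rw [hXY]
        _ ≤ (⌊X⌋ - ⌊Y⌋ : ℚ) := hD1
        _ ≤ _ := hmax1
    · calc ((max (⌊X⌋ - ⌊Y⌋) 0 : ℤ) : ℚ) ≤ max ((⌊X⌋ - ⌊Y⌋ : ℚ)) 0 := hmax2
        _ ≤ max (X - Y + 1) 0 := by
            apply max_le_max hD2 le_rfl
        _ = X - Y + 1 := by
            apply max_eq_left; rw [hXY]; linarith
        _ = (2*(b:ℚ)+1)/(m:ℚ) + 1 := by rw [hXY]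
  constructor
  · exact_mod_cast hQ.1
  · exact_mod_cast hQ.2

end N1Proof
namespace N1Proof

variable {n : ℕ}

/-- the box `[-b,b]^n` -/
noncomputable def box (n : ℕ) (b : ℤ) : Finset (Fin n → ℤ) := Fintype.piFinset fun _ => Finset.Icc (-b) b

lemma count_box (m : ℕ) (hm : 0 < m) (b : ℤ) (hb : 0 ≤ b) (A : Finset (Fin n → ZMod m)) :
    (A.card : ℝ) * (max ((2*(b:ℝ)+1)/m - 1) 0)^n
      ≤ (((box n b).filter (fun x => (fun i => ((x i : ZMod m))) ∈ A)).card : ℝ)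
    ∧ ((((box n b).filter (fun x => (fun i => ((x i : ZMod m))) ∈ A)).card : ℝ)
      ≤ A.card * ((2*(b:ℝ)+1)/m + 1)^n) := by
  classical
  set lo : ℝ := max ((2*(b:ℝ)+1)/m - 1) 0 with hlo
  set hi : ℝ := (2*(b:ℝ)+1)/m + 1 with hhi
  have hhi0 : 0 ≤ hi := by
    have : (0:ℝ) ≤ (2*(b:ℝ)+1)/m := by positivity
    rw [hhi]; linarith
  -- fiber decomposition
  have hsum : ((box n b).filter (fun x => (fun i => ((x i : ZMod m))) ∈ A)).card
      = ∑ a ∈ A, ((box n b).filter (fun x => (fun i => ((x i : ZMod m))) = a)).card := by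
    have h0 := Finset.card_eq_sum_card_fiberwise
      (s := (box n b).filter (fun x => (fun i => ((x i : ZMod m))) ∈ A)) (t := A)
      (f := fun x => (fun i => ((x i : ZMod m))))
      (fun x hx => (Finset.mem_filter.mp hx).2)
    rw [h0]
    apply Finset.sum_congr rfl
    intro a ha
    rw [Finset.filter_filter]
    congr 1
    apply Finset.filter_congr
    intro x _
    constructor
    · rintro ⟨_, h3⟩; exact h3
    · intro h3; exact ⟨h3 ▸ ha, h3⟩
  have hfiber : ∀ a : Fin n → ZMod m,
      ((box n b).filter (fun x => (fun i => ((x i : ZMod m))) = a)).card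
        = ∏ i, ((Finset.Icc (-b) b).filter (fun t : ℤ => (t : ZMod m) = a i)).card := by
    intro a
    have : (box n b).filter (fun x => (fun i => ((x i : ZMod m))) = a)
        = Fintype.piFinset (fun i => (Finset.Icc (-b) b).filter (fun t : ℤ => (t : ZMod m) = a i)) := by
      ext x
      simp only [Finset.mem_filter, box, Fintype.mem_piFinset, _root_.funext_iff, forall_and]
    rw [this, Fintype.card_piFinset]
  have hfiber_bounds : ∀ a : Fin n → ZMod m,
      lo^n ≤ (((box n b).filter (fun x => (fun i => ((x i : ZMod m))) = a)).card : ℝ)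
      ∧ ((((box n b).filter (fun x => (fun i => ((x i : ZMod m))) = a)).card : ℝ) ≤ hi^n) := by
    intro a
    rw [hfiber a]
    push_cast
    have h1d : ∀ i : Fin n,
        lo ≤ (((Finset.Icc (-b) b).filter (fun t : ℤ => (t : ZMod m) = a i)).card : ℝ)
        ∧ ((((Finset.Icc (-b) b).filter (fun t : ℤ => (t : ZMod m) = a i)).card : ℝ) ≤ hi) := by
      intro i
      obtain ⟨hl, hr⟩ := one_dim m hm b hb (a i)
      refine ⟨?_, hr⟩
      rw [hlo]
      apply max_le hl (by positivity)
    constructor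
    · calc lo^n = ∏ _i : Fin n, lo := by rw [Finset.prod_const]; simp
        _ ≤ _ := Finset.prod_le_prod (fun i _ => le_max_right _ 0) (fun i _ => (h1d i).1)
    · calc _ ≤ ∏ _i : Fin n, hi :=
            Finset.prod_le_prod (fun i _ => by positivity) (fun i _ => (h1d i).2)
        _ = hi^n := by rw [Finset.prod_const]; simp
  constructor
  · calc (A.card : ℝ) * lo^n = ∑ _a ∈ A, lo^n := by rw [Finset.sum_const]; ring
      _ ≤ ∑ a ∈ A, (((box n b).filter (fun x => (fun i => ((x i : ZMod m))) = a)).card : ℝ) :=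
          Finset.sum_le_sum (fun a _ => (hfiber_bounds a).1)
      _ = _ := by rw [hsum]; push_cast; ring
  · calc (((box n b).filter (fun x => (fun i => ((x i : ZMod m))) ∈ A)).card : ℝ)
        = ∑ a ∈ A, (((box n b).filter (fun x => (fun i => ((x i : ZMod m))) = a)).card : ℝ) := by
          rw [hsum]; push_cast; ring
      _ ≤ ∑ _a ∈ A, hi^n := Finset.sum_le_sum (fun a _ => (hfiber_bounds a).2)
      _ = A.card * hi^n := by rw [Finset.sum_const]; ring

end N1Proof
namespace N1Proof

variable {n : ℕ}

instance (k : ℕ) (S : Finset Nat.Primes) : NeZero (MS k S) := ⟨(MS_pos k S).ne'⟩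
instance (k : ℕ) (q : Nat.Primes) : NeZero ((q:ℕ)^k) := ⟨(pow_pos q.2.pos k).ne'⟩

lemma rho_le (F : MvPolynomial (Fin n) ℤ) (N : ℕ) [NeZero N] : rhoF F N ≤ N ^ n := by
  classical
  rw [rhoF, Nat.card_eq_fintype_card]
  calc Fintype.card {a : Fin n → ZMod N // aeval a F = 0}
      ≤ Fintype.card (Fin n → ZMod N) := Fintype.card_subtype_le _
    _ = N ^ n := by rw [Fintype.card_fun, ZMod.card, Fintype.card_fin]

open Classical in
/-- allowed residues -/
noncomputable def AS (F : MvPolynomial (Fin n) ℤ) (k : ℕ) (S : Finset Nat.Primes) :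
    Finset (Fin n → ZMod (MS k S)) :=
  Finset.univ.filter (fun a => ∀ q : Nat.Primes, ∀ hq : q ∈ S,
    aeval (fun j => ZMod.castHom (dvd_MS k hq) (ZMod ((q : ℕ) ^ k)) (a j)) F ≠ 0)

open Classical in
lemma AS_card (F : MvPolynomial (Fin n) ℤ) (k : ℕ) (S : Finset Nat.Primes) :
    (AS F k S).card = ∏ q ∈ S, ((q : ℕ) ^ (k * n) - rhoF F ((q : ℕ) ^ k)) := by
  rw [← card_res k F S, Nat.card_eq_fintype_card, Fintype.card_subtype]
  congr 1

lemma mem_AS_iff (F : MvPolynomial (Fin n) ℤ) (k : ℕ) (S : Finset Nat.Primes)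
    (x : Fin n → ℤ) :
    ((fun i => ((x i : ZMod (MS k S)))) ∈ AS F k S)
      ↔ ∀ q ∈ S, ¬ (((q:ℕ):ℤ))^k ∣ eval x F := by
  classical
  simp only [AS, Finset.mem_filter, Finset.mem_univ, true_and]
  apply forall_congr'
  intro q
  apply forall_congr'
  intro hq
  have hcast : ∀ j, ZMod.castHom (dvd_MS k hq) (ZMod ((q : ℕ) ^ k)) ((x j : ZMod (MS k S)))
      = ((x j : ZMod ((q : ℕ) ^ k))) := fun j => map_intCast _ _
  have heq : (fun j => ZMod.castHom (dvd_MS k hq) (ZMod ((q : ℕ) ^ k)) ((x j : ZMod (MS k S))))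
      = (fun j => ((x j : ZMod ((q : ℕ) ^ k)))) := funext hcast
  rw [heq]
  have hdvd : ((((q:ℕ):ℤ))^k ∣ eval x F) ↔ aeval (fun i => ((x i : ZMod ((q:ℕ)^k)))) F = 0 := by
    rw [show (((q:ℕ):ℤ))^k = (((q:ℕ)^k : ℕ) : ℤ) by push_cast; ring]
    exact dvd_iff_cast F ((q:ℕ)^k) x
  rw [not_iff_not.mpr hdvd]

open Classical in
lemma NS_bounds (F : MvPolynomial (Fin n) ℤ) (k : ℕ) (S : Finset Nat.Primes) (b : ℤ)
    (hb : 0 ≤ b) :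
    (((∏ q ∈ S, ((q : ℕ) ^ (k * n) - rhoF F ((q : ℕ) ^ k)) : ℕ) : ℝ)
        * (max ((2*(b:ℝ)+1)/(MS k S) - 1) 0)^n
      ≤ (((box n b).filter (fun x => ∀ q ∈ S, ¬ (((q:ℕ):ℤ))^k ∣ eval x F)).card : ℝ))
    ∧ ((((box n b).filter (fun x => ∀ q ∈ S, ¬ (((q:ℕ):ℤ))^k ∣ eval x F)).card : ℝ)
      ≤ ((∏ q ∈ S, ((q : ℕ) ^ (k * n) - rhoF F ((q : ℕ) ^ k)) : ℕ) : ℝ)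
        * ((2*(b:ℝ)+1)/(MS k S) + 1)^n) := by
  have hfeq : (box n b).filter (fun x => ∀ q ∈ S, ¬ (((q:ℕ):ℤ))^k ∣ eval x F)
      = (box n b).filter (fun x => (fun i => ((x i : ZMod (MS k S)))) ∈ AS F k S) := by
    apply Finset.filter_congr
    intro x _
    exact (mem_AS_iff F k S x).symm
  have hb2 := count_box (MS k S) (MS_pos k S) b hb (AS F k S)
  rw [AS_card] at hb2
  rw [hfeq]
  exact hb2

open Classical in
lemma div_count (F : MvPolynomial (Fin n) ℤ) (k : ℕ) (q : Nat.Primes) (b : ℤ) (hb : 0 ≤ b) :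
    (((box n b).filter (fun x => (((q:ℕ):ℤ))^k ∣ eval x F)).card : ℝ)
      ≤ (rhoF F ((q:ℕ)^k) : ℝ) * ((2*(b:ℝ)+1)/(((q:ℕ)^k : ℕ) : ℝ) + 1)^n := by
  have hq : 0 < (q:ℕ)^k := pow_pos q.2.pos k
  set A : Finset (Fin n → ZMod ((q:ℕ)^k)) :=
    Finset.univ.filter (fun a => aeval a F = 0) with hA
  have hAcard : A.card = rhoF F ((q:ℕ)^k) := by
    rw [hA, rhoF, Nat.card_eq_fintype_card, Fintype.card_subtype]
  have hfeq : (box n b).filter (fun x => (((q:ℕ):ℤ))^k ∣ eval x F)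
      = (box n b).filter (fun x => (fun i => ((x i : ZMod ((q:ℕ)^k)))) ∈ A) := by
    apply Finset.filter_congr
    intro x _
    rw [hA]
    simp only [Finset.mem_filter, Finset.mem_univ, true_and]
    rw [show (((q:ℕ):ℤ))^k = (((q:ℕ)^k : ℕ) : ℤ) by push_cast; ring]
    exact dvd_iff_cast F ((q:ℕ)^k) x
  rw [hfeq, ← hAcard]
  exact (count_box ((q:ℕ)^k) hq b hb A).2

end N1Proof
namespace N1Proof

variable {n : ℕ}

/-- local density at `p` -/
noncomputable def tP (F : MvPolynomial (Fin n) ℤ) (k : ℕ) (p : Nat.Primes) : ℝ :=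
  (rhoF F ((p:ℕ)^k) : ℝ) / ((p:ℕ) : ℝ)^(k*n)

noncomputable def fP (F : MvPolynomial (Fin n) ℤ) (k : ℕ) (p : Nat.Primes) : ℝ :=
  1 - tP F k p

noncomputable def PP (F : MvPolynomial (Fin n) ℤ) (k : ℕ) (S : Finset Nat.Primes) : ℝ :=
  ∏ p ∈ S, fP F k p

noncomputable def CC (F : MvPolynomial (Fin n) ℤ) (k : ℕ) : ℝ :=
  ⨅ S : Finset Nat.Primes, PP F k S

variable (F : MvPolynomial (Fin n) ℤ) (k : ℕ)

lemma tP_nonneg (p : Nat.Primes) : 0 ≤ tP F k p := by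
  unfold tP; positivity

lemma ppow_pos (p : Nat.Primes) : (0:ℝ) < ((p:ℕ) : ℝ)^(k*n) := by
  have : (0:ℝ) < ((p:ℕ):ℝ) := by exact_mod_cast p.2.pos
  positivity

lemma tP_le_one (p : Nat.Primes) : tP F k p ≤ 1 := by
  unfold tP
  rw [div_le_one (ppow_pos k p)]
  have h := rho_le F ((p:ℕ)^k)
  calc (rhoF F ((p:ℕ)^k) : ℝ) ≤ (((p:ℕ)^k : ℕ)^n : ℕ) := by exact_mod_cast h
    _ = ((p:ℕ) : ℝ)^(k*n) := by push_cast; rw [← pow_mul]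

lemma fP_nonneg (p : Nat.Primes) : 0 ≤ fP F k p := by
  have := tP_le_one F k p; unfold fP; linarith

lemma fP_le_one (p : Nat.Primes) : fP F k p ≤ 1 := by
  have := tP_nonneg F k p; unfold fP; linarith

lemma PP_nonneg (S : Finset Nat.Primes) : 0 ≤ PP F k S :=
  Finset.prod_nonneg fun p _ => fP_nonneg F k p

lemma PP_le_one (S : Finset Nat.Primes) : PP F k S ≤ 1 :=
  Finset.prod_le_one (fun p _ => fP_nonneg F k p) (fun p _ => fP_le_one F k p)

lemma PP_antitone : Antitone (PP F k) := by
  intro S S' hss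
  unfold PP
  rw [← Finset.prod_sdiff hss]
  have h1 : ∏ p ∈ S' \ S, fP F k p ≤ 1 :=
    Finset.prod_le_one (fun p _ => fP_nonneg F k p) (fun p _ => fP_le_one F k p)
  have h2 : 0 ≤ ∏ p ∈ S, fP F k p := PP_nonneg F k S
  calc (∏ p ∈ S' \ S, fP F k p) * ∏ p ∈ S, fP F k p
      ≤ 1 * ∏ p ∈ S, fP F k p := mul_le_mul_of_nonneg_right h1 h2
    _ = ∏ p ∈ S, fP F k p := one_mul _

lemma PP_bddBelow : BddBelow (Set.range (PP F k)) :=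
  ⟨0, fun x ⟨S, hS⟩ => hS ▸ PP_nonneg F k S⟩

lemma CC_le_PP (S : Finset Nat.Primes) : CC F k ≤ PP F k S :=
  ciInf_le (PP_bddBelow F k) S

lemma CC_nonneg : 0 ≤ CC F k :=
  le_ciInf fun S => PP_nonneg F k S

lemma hasProd_fP : HasProd (fP F k) (CC F k) :=
  tendsto_atTop_ciInf (PP_antitone F k) (PP_bddBelow F k)

lemma tprod_fP : ∏' p : Nat.Primes, fP F k p = CC F k :=
  (hasProd_fP F k).tprod_eq

lemma RS_eq (S : Finset Nat.Primes) :
    ((∏ q ∈ S, ((q : ℕ) ^ (k * n) - rhoF F ((q : ℕ) ^ k)) : ℕ) : ℝ)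
      = PP F k S * ((MS k S : ℕ) : ℝ)^n := by
  have hMS : ((MS k S : ℕ) : ℝ)^n = ∏ q ∈ S, ((q:ℕ) : ℝ)^(k*n) := by
    unfold MS
    push_cast
    rw [← Finset.prod_pow]
    apply Finset.prod_congr rfl
    intro q _
    rw [← pow_mul]
  rw [hMS, PP, Finset.prod_mul_distrib.symm, Nat.cast_prod]
  apply Finset.prod_congr rfl
  intro q _
  have h := rho_le F ((q:ℕ)^k)
  have h' : rhoF F ((q:ℕ)^k) ≤ (q:ℕ)^(k*n) := by
    calc rhoF F ((q:ℕ)^k) ≤ ((q:ℕ)^k)^n := h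
      _ = (q:ℕ)^(k*n) := by rw [← pow_mul]
  rw [Nat.cast_sub h']
  unfold fP tP
  rw [sub_mul, one_mul, div_mul_cancel₀ _ (ppow_pos k q).ne', Nat.cast_pow]

end N1Proof
namespace N1Proof

variable {n : ℕ}

/-- `ξ₁(B)` -/
noncomputable def xiB (n k : ℕ) (B : ℝ) : ℝ := Real.log B / ((n:ℝ) * (k:ℝ))

/-- primes up to `ξ₁(B)` -/
noncomputable def SPB (n k : ℕ) (B : ℝ) : Finset Nat.Primes :=
  (Finset.range (⌊xiB n k B⌋₊ + 1)).subtype Nat.Prime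

lemma mem_SPB {k : ℕ} (hn : 1 ≤ n) (hk : 1 ≤ k) {B : ℝ} (hB : 1 ≤ B) (q : Nat.Primes) :
    q ∈ SPB n k B ↔ ((q:ℕ):ℝ) ≤ xiB n k B := by
  have hxi : 0 ≤ xiB n k B := by
    unfold xiB
    apply div_nonneg (Real.log_nonneg hB)
    have h1 : (1:ℝ) ≤ (n:ℝ) := by exact_mod_cast hn
    have h2 : (1:ℝ) ≤ (k:ℝ) := by exact_mod_cast hk
    nlinarith
  have hmem : q ∈ SPB n k B ↔ (q:ℕ) ∈ Finset.range (⌊xiB n k B⌋₊ + 1) := Finset.mem_subtype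
  rw [hmem, Finset.mem_range, Nat.lt_succ_iff]
  exact Nat.le_floor_iff hxi

lemma abs_le_iff_floor {B : ℝ} (hB : 1 ≤ B) (z : ℤ) :
    |(z:ℝ)| ≤ B ↔ (-⌊B⌋ ≤ z ∧ z ≤ ⌊B⌋) := by
  rw [abs_le]
  constructor
  · rintro ⟨h1, h2⟩
    refine ⟨?_, Int.le_floor.mpr h2⟩
    rw [neg_le]
    apply Int.le_floor.mpr
    push_cast
    linarith
  · rintro ⟨h1, h2⟩
    have h2' := Int.le_floor.mp h2
    have h1' := Int.le_floor.mp (neg_le.mp h1)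
    push_cast at h1'
    exact ⟨by linarith, h2'⟩

open Classical in
lemma bridge (F : MvPolynomial (Fin n) ℤ) (k : ℕ) (hn : 1 ≤ n) (hk : 1 ≤ k)
    {B : ℝ} (hB : 1 ≤ B) :
    NOneCount F k B = ((box n ⌊B⌋).filter
      (fun x => ∀ q ∈ SPB n k B, ¬ (((q:ℕ):ℤ))^k ∣ eval x F)).card := by
  rw [NOneCount, ← Set.ncard_coe_finset]
  congr 1
  ext x
  simp only [Finset.coe_filter, Set.mem_setOf_eq, box, Fintype.mem_piFinset, Finset.mem_Icc]
  constructor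
  · rintro ⟨h1, h2⟩
    refine ⟨fun i => (abs_le_iff_floor hB (x i)).mp (h1 i), ?_⟩
    intro q hq
    exact h2 q.1 q.2 ((mem_SPB hn hk hB q).mp hq)
  · rintro ⟨h1, h2⟩
    refine ⟨fun i => (abs_le_iff_floor hB (x i)).mpr (h1 i), ?_⟩
    intro p hp hple
    exact h2 ⟨p, hp⟩ ((mem_SPB hn hk hB ⟨p, hp⟩).mpr hple)

end N1Proof
namespace N1Proof

variable {n : ℕ}

lemma tendsto_Lr : Filter.Tendsto (fun B : ℝ => 2*((⌊B⌋:ℤ):ℝ)+1) atTop atTop := by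
  have h1 : Filter.Tendsto (fun B : ℝ => ((⌊B⌋:ℤ):ℝ)) atTop atTop :=
    tendsto_intCast_atTop_atTop.comp tendsto_floor_atTop
  have h2 := h1.const_mul_atTop (show (0:ℝ) < 2 by norm_num)
  exact tendsto_atTop_add_const_right atTop 1 h2

lemma tendsto_xi (hn : 1 ≤ n) {k : ℕ} (hk : 1 ≤ k) :
    Filter.Tendsto (xiB n k) atTop atTop := by
  apply Filter.Tendsto.atTop_div_const
  · have h1 : (1:ℝ) ≤ (n:ℝ) := by exact_mod_cast hn
    have h2 : (1:ℝ) ≤ (k:ℝ) := by exact_mod_cast hk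
    nlinarith
  · exact Real.tendsto_log_atTop

lemma ev_subset (hn : 1 ≤ n) {k : ℕ} (hk : 1 ≤ k) (S : Finset Nat.Primes) :
    ∀ᶠ B in atTop, S ⊆ SPB n k B := by
  have h : ∀ q ∈ S, ∀ᶠ B in atTop, q ∈ SPB n k B := by
    intro q _
    filter_upwards [(tendsto_xi hn hk).eventually_ge_atTop ((q:ℕ):ℝ), eventually_ge_atTop 1]
      with B h1 hB
    exact (mem_SPB hn hk hB q).mpr h1
  filter_upwards [(Finset.eventually_all S).mpr h] with B hB
  intro q hq
  exact hB q hq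

lemma ev_powle (hn : 1 ≤ n) {k : ℕ} (hk : 1 ≤ k) :
    ∀ᶠ B in atTop, ∀ q ∈ SPB n k B, (((q:ℕ):ℝ))^k ≤ 2*((⌊B⌋:ℤ):ℝ)+1 := by
  have hlog := Real.tendsto_pow_log_div_mul_add_atTop 1 0 k one_ne_zero
  have hev := hlog.eventually (eventually_lt_nhds (show (0:ℝ) < 1 by norm_num))
  filter_upwards [hev, eventually_ge_atTop 1] with B h1 hB
  intro q hq
  have hqxi := (mem_SPB hn hk hB q).mp hq
  have hn1 : (1:ℝ) ≤ (n:ℝ)*(k:ℝ) := by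
    have h1' : (1:ℝ) ≤ (n:ℝ) := by exact_mod_cast hn
    have h2' : (1:ℝ) ≤ (k:ℝ) := by exact_mod_cast hk
    nlinarith
  have hlogB : 0 ≤ Real.log B := Real.log_nonneg hB
  have hxile : xiB n k B ≤ Real.log B := by
    rw [xiB]
    exact div_le_self hlogB hn1
  have hq1 : ((q:ℕ):ℝ) ≤ Real.log B := le_trans hqxi hxile
  have hq0 : (0:ℝ) ≤ ((q:ℕ):ℝ) := by positivity
  have hstep : (((q:ℕ):ℝ))^k ≤ (Real.log B)^k := pow_le_pow_left₀ hq0 hq1 k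
  have hBpos : (0:ℝ) < B := lt_of_lt_of_le one_pos hB
  have hlogk : (Real.log B)^k < B := by
    have h1' : (Real.log B)^k / (1*B+0) < 1 := h1
    rw [one_mul, add_zero] at h1'
    calc (Real.log B)^k = ((Real.log B)^k / B) * B := by field_simp
      _ < 1 * B := by
          apply mul_lt_mul_of_pos_right h1' hBpos
      _ = B := one_mul B
  have hfloor : B - 1 < ((⌊B⌋:ℤ):ℝ) := Int.sub_one_lt_floor B
  have : (((q:ℕ):ℝ))^k < 2*((⌊B⌋:ℤ):ℝ)+1 := by
    calc (((q:ℕ):ℝ))^k ≤ (Real.log B)^k := hstep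
      _ < B := hlogk
      _ ≤ 2*((⌊B⌋:ℤ):ℝ)+1 := by linarith
  linarith

end N1Proof
namespace N1Proof

variable {n : ℕ}

open Classical in
lemma upper (F : MvPolynomial (Fin n) ℤ) (k : ℕ) (hn : 1 ≤ n) (hk : 1 ≤ k)
    (S : Finset Nat.Primes) (c : ℝ) (hc : PP F k S < c) :
    ∀ᶠ B in atTop, (NOneCount F k B : ℝ)/(2*((⌊B⌋:ℤ):ℝ)+1)^n < c := by
  set RS : ℕ := ∏ q ∈ S, ((q : ℕ) ^ (k * n) - rhoF F ((q : ℕ) ^ k)) with hRS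
  have hM : (0:ℝ) < ((MS k S : ℕ):ℝ) := by exact_mod_cast MS_pos k S
  -- the comparison function and its limit
  have hinv : Filter.Tendsto (fun B : ℝ => 1/(2*((⌊B⌋:ℤ):ℝ)+1)) atTop (nhds 0) := by
    simp only [one_div]
    exact tendsto_Lr.inv_tendsto_atTop
  have hg : Filter.Tendsto
      (fun B : ℝ => (RS:ℝ) * (1/((MS k S : ℕ):ℝ) + 1/(2*((⌊B⌋:ℤ):ℝ)+1))^n)
      atTop (nhds ((RS:ℝ) * (1/((MS k S : ℕ):ℝ) + 0)^n)) :=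
    tendsto_const_nhds.mul ((tendsto_const_nhds.add hinv).pow n)
  have hval : (RS:ℝ) * (1/((MS k S : ℕ):ℝ) + 0)^n = PP F k S := by
    rw [add_zero, hRS, RS_eq F k S]
    rw [one_div, inv_pow]
    field_simp
  rw [hval] at hg
  have hglt := hg.eventually (eventually_lt_nhds hc)
  filter_upwards [hglt, ev_subset hn hk S, eventually_ge_atTop 1] with B hgB hSB hB
  rw [bridge F k hn hk hB]
  have hb0 : (0:ℤ) ≤ ⌊B⌋ := by
    have : (1:ℤ) ≤ ⌊B⌋ := Int.le_floor.mpr (by exact_mod_cast hB)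
    omega
  have hL1 : (1:ℝ) ≤ ((⌊B⌋:ℤ):ℝ) := by exact_mod_cast Int.le_floor.mpr (by exact_mod_cast hB)
  have hLpos : (0:ℝ) < 2*((⌊B⌋:ℤ):ℝ)+1 := by linarith
  have hmono : (((box n ⌊B⌋).filter
        (fun x => ∀ q ∈ SPB n k B, ¬ (((q:ℕ):ℤ))^k ∣ eval x F)).card : ℝ)
      ≤ (((box n ⌊B⌋).filter
        (fun x => ∀ q ∈ S, ¬ (((q:ℕ):ℤ))^k ∣ eval x F)).card : ℝ) := by
    have hsub : (box n ⌊B⌋).filter (fun x => ∀ q ∈ SPB n k B, ¬ (((q:ℕ):ℤ))^k ∣ eval x F)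
        ⊆ (box n ⌊B⌋).filter (fun x => ∀ q ∈ S, ¬ (((q:ℕ):ℤ))^k ∣ eval x F) := by
      intro x hx
      rw [Finset.mem_filter] at hx ⊢
      exact ⟨hx.1, fun q hqS => hx.2 q (hSB hqS)⟩
    exact_mod_cast Finset.card_le_card hsub
  have hNS := (NS_bounds F k S ⌊B⌋ hb0).2
  have key : (((box n ⌊B⌋).filter
        (fun x => ∀ q ∈ SPB n k B, ¬ (((q:ℕ):ℤ))^k ∣ eval x F)).card : ℝ)
        / (2*((⌊B⌋:ℤ):ℝ)+1)^n
      ≤ (RS:ℝ) * (1/((MS k S : ℕ):ℝ) + 1/(2*((⌊B⌋:ℤ):ℝ)+1))^n := by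
    have hLn : (0:ℝ) < (2*((⌊B⌋:ℤ):ℝ)+1)^n := by positivity
    rw [div_le_iff₀ hLn]
    calc (((box n ⌊B⌋).filter
          (fun x => ∀ q ∈ SPB n k B, ¬ (((q:ℕ):ℤ))^k ∣ eval x F)).card : ℝ)
        ≤ (((box n ⌊B⌋).filter
          (fun x => ∀ q ∈ S, ¬ (((q:ℕ):ℤ))^k ∣ eval x F)).card : ℝ) := hmono
      _ ≤ (RS:ℝ) * ((2*((⌊B⌋:ℤ):ℝ)+1)/((MS k S : ℕ):ℝ) + 1)^n := hNS
      _ = (RS:ℝ) * (1/((MS k S : ℕ):ℝ) + 1/(2*((⌊B⌋:ℤ):ℝ)+1))^n * (2*((⌊B⌋:ℤ):ℝ)+1)^n := by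
          rw [mul_assoc, ← mul_pow]
          congr 2
          field_simp
  exact lt_of_le_of_lt key hgB

end N1Proof
namespace N1Proof

variable {n : ℕ}

open Classical in
lemma lower (F : MvPolynomial (Fin n) ℤ) (k : ℕ) (hn : 1 ≤ n) (hk : 1 ≤ k)
    (c : ℝ) (hc : c < CC F k) :
    ∀ᶠ B in atTop, c < (NOneCount F k B : ℝ)/(2*((⌊B⌋:ℤ):ℝ)+1)^n := by
  rcases lt_or_ge c 0 with hc0 | hc0
  · filter_upwards [eventually_ge_atTop 1] with B hB
    have hL1 : (1:ℝ) ≤ ((⌊B⌋:ℤ):ℝ) := by exact_mod_cast Int.le_floor.mpr (by exact_mod_cast hB)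
    have h0 : (0:ℝ) ≤ (NOneCount F k B : ℝ)/(2*((⌊B⌋:ℤ):ℝ)+1)^n := by positivity
    linarith
  · have hC : 0 < CC F k := lt_of_le_of_lt hc0 hc
    have hsum_bound : ∀ S : Finset Nat.Primes, ∑ p ∈ S, tP F k p ≤ -Real.log (CC F k) := by
      intro S
      have h2 : PP F k S ≤ Real.exp (-(∑ p ∈ S, tP F k p)) := by
        calc PP F k S ≤ ∏ p ∈ S, Real.exp (-(tP F k p)) :=
              Finset.prod_le_prod (fun p _ => fP_nonneg F k p)
                (fun p _ => by unfold fP; linarith [Real.add_one_le_exp (-(tP F k p))])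
          _ = Real.exp (∑ p ∈ S, -(tP F k p)) := (Real.exp_sum S _).symm
          _ = Real.exp (-(∑ p ∈ S, tP F k p)) := by rw [Finset.sum_neg_distrib]
      have h3 : CC F k ≤ Real.exp (-(∑ p ∈ S, tP F k p)) := le_trans (CC_le_PP F k S) h2
      have h4 : Real.log (CC F k) ≤ -(∑ p ∈ S, tP F k p) :=
        (Real.log_le_iff_le_exp hC).mpr h3
      linarith
    have hsummable : Summable (tP F k) :=
      summable_of_sum_le (fun p => tP_nonneg F k p) hsum_bound
    set ε := (CC F k - c)/(2^(n+1)) with hε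
    have hεpos : 0 < ε := div_pos (sub_pos.mpr hc) (by positivity)
    obtain ⟨T, hT⟩ : ∃ T : Finset Nat.Primes,
        (∑' p, tP F k p) - ε < ∑ p ∈ T, tP F k p :=
      (hsummable.hasSum.eventually (eventually_gt_nhds (by linarith))).exists
    have htail : ∀ V : Finset Nat.Primes, Disjoint V T → ∑ p ∈ V, tP F k p ≤ ε := by
      intro V hV
      have h1 : ∑ p ∈ T ∪ V, tP F k p ≤ ∑' p, tP F k p :=
        Summable.sum_le_tsum _ (fun p _ => tP_nonneg F k p) hsummable
      rw [Finset.sum_union hV.symm] at h1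
      linarith
    set RS : ℕ := ∏ q ∈ T, ((q : ℕ) ^ (k * n) - rhoF F ((q : ℕ) ^ k)) with hRS
    set M : ℝ := ((MS k T : ℕ):ℝ) with hM
    have hMpos : (0:ℝ) < M := by rw [hM]; exact_mod_cast MS_pos k T
    have hinv : Filter.Tendsto (fun B : ℝ => 1/(2*((⌊B⌋:ℤ):ℝ)+1)) atTop (nhds 0) := by
      simp only [one_div]
      exact tendsto_Lr.inv_tendsto_atTop
    have hh : Filter.Tendsto
        (fun B : ℝ => (RS:ℝ) * (max (1/M - 1/(2*((⌊B⌋:ℤ):ℝ)+1)) 0)^n - 2^n*ε) atTop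
        (nhds ((RS:ℝ) * (max (1/M - 0) 0)^n - 2^n*ε)) :=
      (tendsto_const_nhds.mul
        (((tendsto_const_nhds.sub hinv).max tendsto_const_nhds).pow n)).sub tendsto_const_nhds
    have hval : (RS:ℝ) * (max (1/M - 0) 0)^n - 2^n*ε = PP F k T - 2^n*ε := by
      rw [sub_zero, max_eq_left (by positivity : (0:ℝ) ≤ 1/M)]
      have hRSeq : (RS:ℝ) = PP F k T * M^n := by rw [hRS, RS_eq F k T]
      rw [hRSeq, one_div, inv_pow, mul_assoc, mul_inv_cancel₀ (by positivity), mul_one]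
    rw [hval] at hh
    have hgoal_lt : c < PP F k T - 2^n*ε := by
      have h1 : CC F k ≤ PP F k T := CC_le_PP F k T
      have h2 : (2:ℝ)^n * ε = (CC F k - c)/2 := by
        rw [hε, pow_succ]
        field_simp
      linarith
    have hev_h := hh.eventually (eventually_gt_nhds hgoal_lt)
    filter_upwards [hev_h, ev_subset hn hk T, ev_powle hn hk, eventually_ge_atTop 1]
      with B hhB hTB hpow hB
    rw [bridge F k hn hk hB]
    have hL1 : (1:ℝ) ≤ ((⌊B⌋:ℤ):ℝ) := by exact_mod_cast Int.le_floor.mpr (by exact_mod_cast hB)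
    set L : ℝ := 2*((⌊B⌋:ℤ):ℝ)+1 with hL
    have hLpos : (0:ℝ) < L := by rw [hL]; linarith
    have hb0 : (0:ℤ) ≤ ⌊B⌋ := by exact_mod_cast (by linarith : (0:ℝ) ≤ ((⌊B⌋:ℤ):ℝ))
    set P1 := (box n ⌊B⌋).filter (fun x => ∀ q ∈ SPB n k B, ¬ (((q:ℕ):ℤ))^k ∣ eval x F) with hP1
    set PT := (box n ⌊B⌋).filter (fun x => ∀ q ∈ T, ¬ (((q:ℕ):ℤ))^k ∣ eval x F) with hPT
    have hsplit : PT ⊆ P1 ∪ (SPB n k B \ T).biUnion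
        (fun q => (box n ⌊B⌋).filter (fun x => (((q:ℕ):ℤ))^k ∣ eval x F)) := by
      intro x hx
      rw [hPT, Finset.mem_filter] at hx
      by_cases hx2 : ∀ q ∈ SPB n k B, ¬ (((q:ℕ):ℤ))^k ∣ eval x F
      · exact Finset.mem_union_left _ (by rw [hP1, Finset.mem_filter]; exact ⟨hx.1, hx2⟩)
      · push_neg at hx2
        obtain ⟨q, hq, hdvd⟩ := hx2
        have hqT : q ∉ T := fun hqT => hx.2 q hqT hdvd
        apply Finset.mem_union_right
        apply Finset.mem_biUnion.mpr
        exact ⟨q, Finset.mem_sdiff.mpr ⟨hq, hqT⟩, Finset.mem_filter.mpr ⟨hx.1, hdvd⟩⟩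
    have hcard : (PT.card:ℝ) ≤ (P1.card:ℝ) + ∑ q ∈ SPB n k B \ T,
        (((box n ⌊B⌋).filter (fun x => (((q:ℕ):ℤ))^k ∣ eval x F)).card : ℝ) := by
      have h1 := Finset.card_le_card hsplit
      have h2 := Finset.card_union_le P1 ((SPB n k B \ T).biUnion
        (fun q => (box n ⌊B⌋).filter (fun x => (((q:ℕ):ℤ))^k ∣ eval x F)))
      have h3 := Finset.card_biUnion_le (s := SPB n k B \ T)
        (t := fun q => (box n ⌊B⌋).filter (fun x => (((q:ℕ):ℤ))^k ∣ eval x F))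
      have h4 : PT.card ≤ P1.card + ∑ q ∈ SPB n k B \ T,
          (((box n ⌊B⌋).filter (fun x => (((q:ℕ):ℤ))^k ∣ eval x F)).card) :=
        le_trans h1 (le_trans h2 (Nat.add_le_add_left h3 _))
      exact_mod_cast h4
    have hq_bound : ∀ q ∈ SPB n k B \ T,
        (((box n ⌊B⌋).filter (fun x => (((q:ℕ):ℤ))^k ∣ eval x F)).card : ℝ)
          ≤ 2^n * tP F k q * L^n := by
      intro q hq'
      have hqS := (Finset.mem_sdiff.mp hq').1
      have hpk : (((q:ℕ):ℝ))^k ≤ L := hpow q hqS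
      have hq0 : (0:ℝ) < ((q:ℕ):ℝ) := by exact_mod_cast q.2.pos
      have hpk0 : (0:ℝ) < (((q:ℕ):ℝ))^k := by positivity
      have hdc := div_count F k q ⌊B⌋ hb0
      have hcast : ((((q:ℕ)^k : ℕ)):ℝ) = (((q:ℕ):ℝ))^k := by push_cast; ring
      rw [hcast] at hdc
      have h1div : (1:ℝ) ≤ L/((((q:ℕ):ℝ))^k) := (one_le_div hpk0).mpr hpk
      have hstep : (L/(((q:ℕ):ℝ))^k + 1)^n ≤ (2*(L/(((q:ℕ):ℝ))^k))^n := by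
        apply pow_le_pow_left₀ (by positivity)
        linarith
      calc (((box n ⌊B⌋).filter (fun x => (((q:ℕ):ℤ))^k ∣ eval x F)).card : ℝ)
          ≤ (rhoF F ((q:ℕ)^k) : ℝ) * (L/(((q:ℕ):ℝ))^k + 1)^n := hdc
        _ ≤ (rhoF F ((q:ℕ)^k) : ℝ) * (2*(L/(((q:ℕ):ℝ))^k))^n :=
            mul_le_mul_of_nonneg_left hstep (by positivity)
        _ = 2^n * tP F k q * L^n := by
            unfold tP
            rw [mul_pow, div_pow, ← pow_mul]
            field_simp
    have htail_sum : ∑ q ∈ SPB n k B \ T, tP F k q ≤ ε := htail _ Finset.sdiff_disjoint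
    have hDsum : ∑ q ∈ SPB n k B \ T,
        (((box n ⌊B⌋).filter (fun x => (((q:ℕ):ℤ))^k ∣ eval x F)).card : ℝ)
          ≤ 2^n * ε * L^n := by
      calc ∑ q ∈ SPB n k B \ T,
            (((box n ⌊B⌋).filter (fun x => (((q:ℕ):ℤ))^k ∣ eval x F)).card : ℝ)
          ≤ ∑ q ∈ SPB n k B \ T, 2^n * tP F k q * L^n := Finset.sum_le_sum hq_bound
        _ = 2^n * (∑ q ∈ SPB n k B \ T, tP F k q) * L^n := by
            rw [Finset.mul_sum, Finset.sum_mul]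
        _ ≤ 2^n * ε * L^n := by
            apply mul_le_mul_of_nonneg_right _ (by positivity)
            exact mul_le_mul_of_nonneg_left htail_sum (by positivity)
    have hNS := (NS_bounds F k T ⌊B⌋ hb0).1
    have hmain : (RS:ℝ) * (max (L/M - 1) 0)^n - 2^n*ε*L^n ≤ (P1.card : ℝ) := by
      have hNS' : (RS:ℝ) * (max (L/M - 1) 0)^n ≤ (PT.card:ℝ) := hNS
      linarith
    have hLn : (0:ℝ) < L^n := by positivity
    have hdiv : (RS:ℝ) * (max (1/M - 1/L) 0)^n - 2^n*ε ≤ (P1.card:ℝ)/L^n := by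
      rw [le_div_iff₀ hLn]
      have hmaxeq : (max (1/M - 1/L) 0) * L = max (L/M - 1) 0 := by
        rw [max_mul_of_nonneg _ _ (le_of_lt hLpos), zero_mul]
        congr 1
        field_simp
      calc ((RS:ℝ) * (max (1/M - 1/L) 0)^n - 2^n*ε) * L^n
          = (RS:ℝ) * ((max (1/M - 1/L) 0)*L)^n - 2^n*ε*L^n := by rw [mul_pow]; ring
        _ = (RS:ℝ) * (max (L/M - 1) 0)^n - 2^n*ε*L^n := by rw [hmaxeq]
        _ ≤ (P1.card : ℝ) := hmain
    exact lt_of_lt_of_le hhB hdiv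

end N1Proof
theorem N1_asymptotic (n k d : ℕ) (hn : 1 ≤ n) (hk : 2 ≤ k) (hd : 2 ≤ d)
    (F : MvPolynomial (Fin n) ℤ) (hdeg : F.totalDegree = d)
    (hF : ∀ p : ℕ, p.Prime → ∃ m : Fin n → ℤ, ¬ ((p : ℤ) ^ k ∣ eval m F)) :
    Tendsto (fun B : ℝ => (NOneCount F k B : ℝ) / (2 * (⌊B⌋ : ℝ) + 1) ^ n) atTop
      (nhds (∏' p : Nat.Primes,
        ((1 : ℝ) - (rhoF F ((p : ℕ) ^ k) : ℝ) / ((p : ℕ) : ℝ) ^ (k * n)))) := by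
  have hk1 : 1 ≤ k := le_trans (by norm_num) hk
  have htp : (∏' p : Nat.Primes,
      ((1 : ℝ) - (rhoF F ((p : ℕ) ^ k) : ℝ) / ((p : ℕ) : ℝ) ^ (k * n)))
      = N1Proof.CC F k := by
    rw [← N1Proof.tprod_fP F k]
    rfl
  rw [htp]
  rw [tendsto_order]
  constructor
  · intro c hc
    exact N1Proof.lower F k hn hk1 c hc
  · intro c hc
    obtain ⟨S, hS⟩ := exists_lt_of_ciInf_lt hc
    exact N1Proof.upper F k hn hk1 S c hS
end

section
/- Let n ≥ 1 and let F ∈ ℤ[x_1,…,x_n] be a polynomial whose degree in the variable x_1 is at most d. Then for every prime p and every real B ≥ 1, the number of x ∈ ℤ^n with |x_i| ≤ B for all i such that p² | F(x) and p ∤ (∂F/∂x_1)(x) is at most d (2B+1)^{n−1} (2B/p² + 1). -/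
open MvPolynomial

/-- Number of integers in `[-m, m]` lying in a single residue class mod `q`. -/
lemma hlp_class_count (q m : ℤ) (hq : 0 < q) (s : Finset ℤ)
    (hs : s ⊆ Finset.Icc (-m) m)
    (hcong : ∀ t ∈ s, ∀ u ∈ s, q ∣ t - u) :
    s.card ≤ ((2 * m) / q).toNat + 1 := by
  rcases s.eq_empty_or_nonempty with rfl | hne
  · simp
  have t0mem := s.min'_mem hne
  set t0 := s.min' hne with ht0
  have key : s.card ≤ (Finset.range (((2 * m) / q).toNat + 1)).card := by
    apply Finset.card_le_card_of_injOn (fun t => ((t - t0) / q).toNat)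
    · intro t ht
      simp only [Finset.mem_coe, Finset.mem_range]
      have h1 : t - t0 ≤ 2 * m := by
        have h2 := (Finset.mem_Icc.mp (hs ht)).2
        have h3 := (Finset.mem_Icc.mp (hs t0mem)).1
        omega
      have h0 : 0 ≤ t - t0 := by
        have := s.min'_le t ht; omega
      have hdn : 0 ≤ (t - t0) / q := Int.ediv_nonneg h0 hq.le
      have hdl : (t - t0) / q ≤ (2 * m) / q := Int.ediv_le_ediv hq h1
      omega
    · intro a ha b hb hab
      have da := hcong a ha t0 t0mem
      have db := hcong b hb t0 t0mem
      have ha0 : 0 ≤ a - t0 := by have := s.min'_le a ha; omega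
      have hb0 : 0 ≤ b - t0 := by have := s.min'_le b hb; omega
      have ha1 : 0 ≤ (a - t0) / q := Int.ediv_nonneg ha0 hq.le
      have hb1 : 0 ≤ (b - t0) / q := Int.ediv_nonneg hb0 hq.le
      have heq : (a - t0) / q = (b - t0) / q := by
        simp only at hab; omega
      have ea := Int.ediv_mul_cancel da
      have eb := Int.ediv_mul_cancel db
      have : a - t0 = b - t0 := by rw [← ea, ← eb, heq]
      omega
  simpa using key

/-- Core univariate counting lemma. -/
lemma hlp_core_count (p : ℕ) (hp : p.Prime) (d : ℕ) (g : Polynomial ℤ)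
    (hg : g.natDegree ≤ d) (m : ℤ) (B : ℝ) (hm0 : 0 ≤ m) (hmB : (m : ℝ) ≤ B)
    (hB : 1 ≤ B) :
    (((Finset.Icc (-m) m).filter
        (fun t => (p : ℤ) ^ 2 ∣ g.eval t ∧
          ¬ ((p : ℤ) ∣ g.derivative.eval t))).card : ℝ)
      ≤ d * (2 * B / (p : ℝ) ^ 2 + 1) := by
  classical
  haveI : Fact p.Prime := ⟨hp⟩
  have hp0 : (0 : ℝ) < (p : ℝ) := by exact_mod_cast hp.pos
  have hB0 : (0 : ℝ) ≤ B := by linarith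
  have hr0 : (0 : ℝ) ≤ 2 * B / (p : ℝ) ^ 2 + 1 := by
    have : (0 : ℝ) ≤ 2 * B / (p : ℝ) ^ 2 := by positivity
    linarith
  set A : Finset ℤ := (Finset.Icc (-m) m).filter
    (fun t => (p : ℤ) ^ 2 ∣ g.eval t ∧ ¬ ((p : ℤ) ∣ g.derivative.eval t)) with hAdef
  rcases A.eq_empty_or_nonempty with he | hne
  · rw [he]
    simpa using mul_nonneg (Nat.cast_nonneg d) hr0
  -- facts about elements of A
  have hmem : ∀ t ∈ A, t ∈ Finset.Icc (-m) m ∧ (p : ℤ) ^ 2 ∣ g.eval t ∧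
      ¬ ((p : ℤ) ∣ g.derivative.eval t) := by
    intro t ht
    have := Finset.mem_filter.mp ht
    exact ⟨this.1, this.2.1, this.2.2⟩
  obtain ⟨t1, ht1⟩ := hne
  set c : ℤ → ZMod (p ^ 2) := fun t => (t : ZMod (p ^ 2)) with hc
  set R : Finset (ZMod (p ^ 2)) := A.image c with hR
  have hfib : A.card = ∑ r ∈ R, (A.filter fun t => c t = r).card :=
    Finset.card_eq_sum_card_fiberwise (fun t ht => Finset.mem_image_of_mem c ht)
  have hq0 : (0 : ℤ) < ((p : ℤ)) ^ 2 := pow_pos (by exact_mod_cast hp.pos) 2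
  -- per residue class bound
  have hclass : ∀ r ∈ R, (((A.filter fun t => c t = r).card : ℝ)) ≤ 2 * B / (p : ℝ) ^ 2 + 1 := by
    intro r _
    have hsub : (A.filter fun t => c t = r) ⊆ Finset.Icc (-m) m :=
      (Finset.filter_subset _ _).trans (Finset.filter_subset _ _)
    have hcong : ∀ t ∈ (A.filter fun t => c t = r), ∀ u ∈ (A.filter fun t => c t = r),
        (p : ℤ) ^ 2 ∣ t - u := by
      intro t ht u hu
      have h1 : c t = c u := by
        rw [(Finset.mem_filter.mp ht).2, (Finset.mem_filter.mp hu).2]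
      have h2 : t ≡ u [ZMOD ((p ^ 2 : ℕ) : ℤ)] := (ZMod.intCast_eq_intCast_iff t u (p ^ 2)).mp h1
      have h3 := (h2.symm).dvd
      push_cast at h3
      exact h3
    have hcc := hlp_class_count ((p : ℤ) ^ 2) m hq0 _ hsub hcong
    have hstep1 : (((A.filter fun t => c t = r).card : ℝ)) ≤
        (((2 * m) / ((p : ℤ) ^ 2)).toNat : ℝ) + 1 := by
      exact_mod_cast hcc
    have hd0 : (0 : ℤ) ≤ (2 * m) / ((p : ℤ) ^ 2) := Int.ediv_nonneg (by omega) hq0.le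
    have hstep2 : (((2 * m) / ((p : ℤ) ^ 2)).toNat : ℝ) ≤ 2 * B / (p : ℝ) ^ 2 := by
      have hcast : (((2 * m) / ((p : ℤ) ^ 2)).toNat : ℝ) = (((2 * m) / ((p : ℤ) ^ 2) : ℤ) : ℝ) := by
        exact_mod_cast congrArg (fun z : ℤ => (z : ℝ)) (Int.toNat_of_nonneg hd0)
      rw [hcast, le_div_iff₀ (by positivity)]
      have hmul : ((2 * m) / ((p : ℤ) ^ 2)) * ((p : ℤ) ^ 2) ≤ 2 * m :=
        Int.ediv_mul_le _ (by positivity)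
      calc ((((2 * m) / ((p : ℤ) ^ 2)) : ℤ) : ℝ) * (p : ℝ) ^ 2
          = ((((2 * m) / ((p : ℤ) ^ 2)) * ((p : ℤ) ^ 2) : ℤ) : ℝ) := by push_cast; ring
        _ ≤ ((2 * m : ℤ) : ℝ) := by exact_mod_cast hmul
        _ ≤ 2 * B := by push_cast; linarith
    linarith
  -- number of residue classes is at most d
  have hRd : R.card ≤ d := by
    set f : ℤ →+* ZMod p := Int.castRingHom (ZMod p) with hf
    set gb : Polynomial (ZMod p) := g.map f with hgb
    have hgb0 : gb ≠ 0 := by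
      intro h0
      have hA1 := hmem t1 ht1
      apply hA1.2.2
      have hd0 : g.derivative.map f = 0 := by
        rw [← Polynomial.derivative_map, ← hgb, h0]; simp
      have hev : f (g.derivative.eval t1) = 0 := by
        rw [← Polynomial.eval₂_at_apply, ← Polynomial.eval_map, hd0]; simp
      have : ((g.derivative.eval t1 : ℤ) : ZMod p) = 0 := hev
      rwa [ZMod.intCast_zmod_eq_zero_iff_dvd] at this
    set h : ZMod (p ^ 2) →+* ZMod p := ZMod.castHom (dvd_pow_self p two_ne_zero) (ZMod p) with hh
    -- Hensel-type injectivity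
    have hensel : ∀ t ∈ A, ∀ u ∈ A, ((t : ZMod p) = (u : ZMod p)) → c t = c u := by
      intro t ht u hu htu
      have h1 : (p : ℤ) ∣ u - t := by
        have h2 := ((ZMod.intCast_eq_intCast_iff t u p).mp htu).dvd
        push_cast at h2
        exact h2
      obtain ⟨w, hw⟩ := h1
      obtain ⟨k, hk⟩ := g.binomExpansion t ((p : ℤ) * w)
      have hAt := hmem t ht
      have hAu := hmem u hu
      have hu' : t + (p : ℤ) * w = u := by omega
      rw [hu'] at hk
      have hd1 : (p : ℤ) ^ 2 ∣ g.derivative.eval t * ((p : ℤ) * w) := by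
        have hsq : (p : ℤ) ^ 2 ∣ k * ((p : ℤ) * w) ^ 2 := ⟨k * w ^ 2, by ring⟩
        have : g.derivative.eval t * ((p : ℤ) * w) =
            g.eval u - g.eval t - k * ((p : ℤ) * w) ^ 2 := by linarith [hk]
        rw [this]
        exact dvd_sub (dvd_sub hAu.2.1 hAt.2.1) hsq
      obtain ⟨z, hz⟩ := hd1
      have hpne : (p : ℤ) ≠ 0 := by exact_mod_cast hp.pos.ne'
      have hz2 : g.derivative.eval t * w = (p : ℤ) * z := by
        have h3 : (p : ℤ) * (g.derivative.eval t * w) = (p : ℤ) * ((p : ℤ) * z) := by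
          ring_nf; ring_nf at hz; linarith [hz]
        exact mul_left_cancel₀ hpne h3
      have hpp : Prime (p : ℤ) := Nat.prime_iff_prime_int.mp hp
      have hdw : (p : ℤ) ∣ w := by
        rcases hpp.dvd_mul.mp ⟨z, hz2⟩ with h4 | h4
        · exact absurd h4 hAt.2.2
        · exact h4
      obtain ⟨v, hv⟩ := hdw
      have hfin : ((p : ℤ) ^ 2) ∣ u - t := ⟨v, by rw [hw, hv]; ring⟩
      have hmodeq : t ≡ u [ZMOD ((p ^ 2 : ℕ) : ℤ)] := by
        apply Int.ModEq.symm
        apply Int.modEq_iff_dvd.mpr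
        push_cast
        have : t - u = -(u - t) := by ring
        rw [this]
        exact dvd_neg.mpr hfin
      exact (ZMod.intCast_eq_intCast_iff t u (p ^ 2)).mpr hmodeq
    have hinj : Set.InjOn h (R : Set (ZMod (p ^ 2))) := by
      intro r1 hr1 r2 hr2 hhr
      obtain ⟨t, ht, rfl⟩ := Finset.mem_image.mp (Finset.mem_coe.mp hr1)
      obtain ⟨u, hu, rfl⟩ := Finset.mem_image.mp (Finset.mem_coe.mp hr2)
      apply hensel t ht u hu
      have e1 : h (c t) = ((t : ℤ) : ZMod p) := by
        simp only [hc]; exact map_intCast h t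
      have e2 : h (c u) = ((u : ℤ) : ZMod p) := by
        simp only [hc]; exact map_intCast h u
      rw [← e1, ← e2, hhr]
    have hcardim : R.card = (R.image h).card := (Finset.card_image_of_injOn hinj).symm
    have hsubroots : R.image h ⊆ gb.roots.toFinset := by
      intro r hr
      obtain ⟨r', hr', rfl⟩ := Finset.mem_image.mp hr
      obtain ⟨t, ht, rfl⟩ := Finset.mem_image.mp hr'
      rw [Multiset.mem_toFinset, Polynomial.mem_roots hgb0]
      have hAt := hmem t ht
      have hdvd : (p : ℤ) ∣ g.eval t := by
        refine dvd_trans ?_ hAt.2.1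
        exact ⟨(p : ℤ), by ring⟩
      have hzero : gb.eval ((t : ℤ) : ZMod p) = 0 := by
        rw [hgb, Polynomial.eval_map]
        have : ((t : ℤ) : ZMod p) = f t := rfl
        rw [this, Polynomial.eval₂_at_apply]
        have : (((g.eval t : ℤ)) : ZMod p) = 0 := by
          rwa [ZMod.intCast_zmod_eq_zero_iff_dvd]
        exact this
      have e1 : h (c t) = ((t : ℤ) : ZMod p) := by
        simp only [hc]; exact map_intCast h t
      rw [e1]
      exact hzero
    calc R.card = (R.image h).card := hcardim
      _ ≤ gb.roots.toFinset.card := Finset.card_le_card hsubroots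
      _ ≤ Multiset.card gb.roots := Multiset.toFinset_card_le _
      _ ≤ gb.natDegree := Polynomial.card_roots' gb
      _ ≤ g.natDegree := Polynomial.natDegree_map_le
      _ ≤ d := hg
  calc (A.card : ℝ) = ∑ r ∈ R, ((A.filter fun t => c t = r).card : ℝ) := by
        exact_mod_cast hfib
    _ ≤ R.card • (2 * B / (p : ℝ) ^ 2 + 1) := Finset.sum_le_card_nsmul _ _ _ hclass
    _ = (R.card : ℝ) * (2 * B / (p : ℝ) ^ 2 + 1) := by rw [nsmul_eq_mul]
    _ ≤ (d : ℝ) * (2 * B / (p : ℝ) ^ 2 + 1) := by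
        apply mul_le_mul_of_nonneg_right _ hr0
        exact_mod_cast hRd

/-- evaluation glue -/
lemma hlp_eval_eval₂ {n : ℕ} (σ : Fin n → Polynomial ℤ) (F : MvPolynomial (Fin n) ℤ)
    (t : ℤ) :
    (MvPolynomial.eval₂ Polynomial.C σ F).eval t
      = MvPolynomial.eval (fun j => (σ j).eval t) F := by
  induction F using MvPolynomial.induction_on with
  | C a => simp only [MvPolynomial.eval₂_C, Polynomial.eval_C, MvPolynomial.eval_C]
  | add f g hf hg => simp [hf, hg]
  | mul_X f j hf =>
    rw [MvPolynomial.eval₂_mul, MvPolynomial.eval₂_X, Polynomial.eval_mul, hf,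
      MvPolynomial.eval_mul, MvPolynomial.eval_X]

/-- derivative glue -/
lemma hlp_derivative_eval₂ {n : ℕ} (σ : Fin n → Polynomial ℤ) (i0 : Fin n)
    (hσ : ∀ j, Polynomial.derivative (σ j) = if j = i0 then 1 else 0)
    (F : MvPolynomial (Fin n) ℤ) :
    Polynomial.derivative (MvPolynomial.eval₂ Polynomial.C σ F)
      = MvPolynomial.eval₂ Polynomial.C σ (MvPolynomial.pderiv i0 F) := by
  induction F using MvPolynomial.induction_on with
  | C a =>
    rw [MvPolynomial.eval₂_C, Polynomial.derivative_C, MvPolynomial.pderiv_C,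
      MvPolynomial.eval₂_zero]
  | add f g hf hg => simp [MvPolynomial.eval₂_add, hf, hg]
  | mul_X f j hf =>
    rw [MvPolynomial.eval₂_mul, MvPolynomial.eval₂_X, Polynomial.derivative_mul, hf, hσ j,
      MvPolynomial.pderiv_mul, MvPolynomial.eval₂_add, MvPolynomial.eval₂_mul,
      MvPolynomial.eval₂_mul, MvPolynomial.eval₂_X]
    by_cases h : j = i0
    · subst h
      rw [MvPolynomial.pderiv_X_self, MvPolynomial.eval₂_one, if_pos rfl, mul_one]
    · rw [MvPolynomial.pderiv_X_of_ne h, MvPolynomial.eval₂_zero, if_neg h, mul_zero]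

/-- degree glue -/
lemma hlp_natDegree_eval₂ {n : ℕ} (σ : Fin n → Polynomial ℤ) (i0 : Fin n)
    (hσ : ∀ j, (σ j).natDegree ≤ if j = i0 then 1 else 0)
    (F : MvPolynomial (Fin n) ℤ) :
    (MvPolynomial.eval₂ Polynomial.C σ F).natDegree ≤ F.degreeOf i0 := by
  classical
  conv_lhs => rw [← MvPolynomial.support_sum_monomial_coeff F]
  have hsum : MvPolynomial.eval₂ Polynomial.C σ
        (∑ k ∈ F.support, MvPolynomial.monomial k (MvPolynomial.coeff k F))
      = ∑ k ∈ F.support, MvPolynomial.eval₂ Polynomial.C σ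
          (MvPolynomial.monomial k (MvPolynomial.coeff k F)) := by
    simp only [← MvPolynomial.coe_eval₂Hom, map_sum]
  rw [hsum]
  apply Polynomial.natDegree_sum_le_of_forall_le
  intro k hk
  rw [MvPolynomial.eval₂_monomial]
  refine le_trans (Polynomial.natDegree_mul_le) ?_
  rw [Polynomial.natDegree_C, zero_add]
  have hk0 : k i0 ≤ F.degreeOf i0 := by
    rw [MvPolynomial.degreeOf_eq_sup]
    exact Finset.le_sup (f := fun m => m i0) hk
  refine le_trans ?_ hk0
  rw [Finsupp.prod]
  refine le_trans (Polynomial.natDegree_prod_le _ _) ?_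
  have hterm : ∀ j ∈ k.support, (σ j ^ k j).natDegree ≤ if j = i0 then k i0 else 0 := by
    intro j hj
    refine le_trans Polynomial.natDegree_pow_le ?_
    by_cases hji : j = i0
    · subst hji
      have h1 := hσ j
      rw [if_pos rfl] at h1 ⊢
      calc k j * (σ j).natDegree ≤ k j * 1 := Nat.mul_le_mul_left _ h1
        _ = k j := Nat.mul_one _
    · have h1 := hσ j
      rw [if_neg hji] at h1 ⊢
      simp [Nat.le_zero.mp h1]
  refine le_trans (Finset.sum_le_sum hterm) ?_
  rw [Finset.sum_ite_eq' k.support i0 (fun _ => k i0)]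
  split <;> simp

theorem dagger_count_bound (n d : ℕ) (hn : 1 ≤ n)
    (F : MvPolynomial (Fin n) ℤ)
    (hdeg : F.degreeOf ⟨0, by omega⟩ ≤ d)
    (p : ℕ) (hp : p.Prime) (B : ℝ) (hB : 1 ≤ B) :
    (Set.ncard {x : Fin n → ℤ | (∀ i, |(x i : ℝ)| ≤ B) ∧
        (p : ℤ) ^ 2 ∣ eval x F ∧
        ¬ ((p : ℤ) ∣ eval x (pderiv (⟨0, by omega⟩ : Fin n) F))} : ℝ) ≤
      d * (2 * B + 1) ^ (n - 1) * (2 * B / (p : ℝ) ^ 2 + 1) := by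
  classical
  have key : ∀ i0 : Fin n, F.degreeOf i0 ≤ d →
      (Set.ncard {x : Fin n → ℤ | (∀ i, |(x i : ℝ)| ≤ B) ∧
        (p : ℤ) ^ 2 ∣ eval x F ∧
        ¬ ((p : ℤ) ∣ eval x (pderiv i0 F))} : ℝ) ≤
      d * (2 * B + 1) ^ (n - 1) * (2 * B / (p : ℝ) ^ 2 + 1) := by
    intro i0 hdeg'
    set m : ℤ := ⌊B⌋ with hm
    have hB0 : (0 : ℝ) ≤ B := by linarith
    have hm0 : 0 ≤ m := Int.le_floor.mpr (by simpa using hB0)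
    have hmB : (m : ℝ) ≤ B := Int.floor_le B
    have hp0R : (0 : ℝ) < (p : ℝ) := by exact_mod_cast hp.pos
    have hr0 : (0 : ℝ) ≤ 2 * B / (p : ℝ) ^ 2 + 1 := by
      have : (0 : ℝ) ≤ 2 * B / (p : ℝ) ^ 2 := by positivity
      linarith
    set P : (Fin n → ℤ) → Prop := fun x => (∀ i, |(x i : ℝ)| ≤ B) ∧
        ((p : ℤ) ^ 2 ∣ eval x F ∧ ¬ ((p : ℤ) ∣ eval x (pderiv i0 F))) with hP
    set T : Finset (Fin n → ℤ) :=
      (Fintype.piFinset fun _ : Fin n => Finset.Icc (-m) m).filter P with hT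
    have hsetT : {x : Fin n → ℤ | (∀ i, |(x i : ℝ)| ≤ B) ∧
        (p : ℤ) ^ 2 ∣ eval x F ∧
        ¬ ((p : ℤ) ∣ eval x (pderiv i0 F))} = ↑T := by
      ext x
      simp only [hT, Finset.coe_filter, Set.mem_setOf_eq, Fintype.mem_piFinset,
        Finset.mem_Icc, hP]
      constructor
      · intro hx
        refine ⟨fun i => ?_, hx.1, hx.2⟩
        have h1 := hx.1 i
        have h2 : x i ≤ m := Int.le_floor.mpr (le_trans (le_abs_self _) h1)
        have h3 : -(x i) ≤ m := by
          apply Int.le_floor.mpr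
          push_cast
          exact le_trans (neg_le_abs _) h1
        omega
      · intro hx
        exact ⟨hx.2.1, hx.2.2⟩
    rw [hsetT, Set.ncard_coe_finset]
    -- split off the first coordinate
    set σf : ({j : Fin n // j ≠ i0} → ℤ) → Fin n → Polynomial ℤ :=
      fun y j => if h : j = i0 then Polynomial.X else Polynomial.C (y ⟨j, h⟩) with hσf
    set gpoly : ({j : Fin n // j ≠ i0} → ℤ) → Polynomial ℤ :=
      fun y => MvPolynomial.eval₂ Polynomial.C (σf y) F with hgpoly
    have hσderiv : ∀ y j, Polynomial.derivative (σf y j) = if j = i0 then 1 else 0 := by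
      intro y j; by_cases h : j = i0 <;> simp [hσf, h]
    have hσdeg : ∀ y j, (σf y j).natDegree ≤ if j = i0 then 1 else 0 := by
      intro y j; by_cases h : j = i0 <;> simp [hσf, h]
    have hgdeg : ∀ y, (gpoly y).natDegree ≤ d :=
      fun y => le_trans (hlp_natDegree_eval₂ (σf y) i0 (hσdeg y) F) hdeg'
    set ρ : (Fin n → ℤ) → ({j : Fin n // j ≠ i0} → ℤ) := fun x j => x j.1 with hρ
    set Ybox := Fintype.piFinset fun _ : {j : Fin n // j ≠ i0} => Finset.Icc (-m) m with hY
    have hfib : T.card = ∑ y ∈ Ybox, (T.filter fun x => ρ x = y).card := by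
      apply Finset.card_eq_sum_card_fiberwise
      intro x hx
      simp only [hY, Finset.mem_coe, Fintype.mem_piFinset]
      intro j
      have hbox := (Finset.mem_filter.mp hx).1
      exact (Fintype.mem_piFinset.mp hbox) j.1
    set Afin : ({j : Fin n // j ≠ i0} → ℤ) → Finset ℤ := fun y =>
      (Finset.Icc (-m) m).filter
        (fun t => (p : ℤ) ^ 2 ∣ (gpoly y).eval t ∧
          ¬ ((p : ℤ) ∣ (gpoly y).derivative.eval t)) with hAfin
    have hfibcard : ∀ y, (T.filter fun x => ρ x = y).card ≤ (Afin y).card := by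
      intro y
      apply Finset.card_le_card_of_injOn (fun x => x i0)
      · intro x hx
        obtain ⟨hxT, hxρ⟩ := Finset.mem_filter.mp hx
        obtain ⟨hxbox, hxP⟩ := Finset.mem_filter.mp hxT
        have hxfun : (fun j => (σf y j).eval (x i0)) = x := by
          funext j
          by_cases h : j = i0
          · subst h; simp [hσf]
          · have hyj : y ⟨j, h⟩ = x j := by rw [← hxρ]
            simp [hσf, h, hyj]
        have he1 : (gpoly y).eval (x i0) = eval x F := by
          rw [hgpoly, hlp_eval_eval₂, hxfun]
        have he2 : (gpoly y).derivative.eval (x i0) = eval x (pderiv i0 F) := by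
          rw [hgpoly, hlp_derivative_eval₂ (σf y) i0 (hσderiv y), hlp_eval_eval₂, hxfun]
        rw [Finset.mem_coe, hAfin, Finset.mem_filter]
        refine ⟨Fintype.mem_piFinset.mp hxbox i0, ?_, ?_⟩
        · rw [he1]; exact hxP.2.1
        · rw [he2]; exact hxP.2.2
      · intro x hx x' hx' hxx
        have hxρ := (Finset.mem_filter.mp (Finset.mem_coe.mp hx)).2
        have hx'ρ := (Finset.mem_filter.mp (Finset.mem_coe.mp hx')).2
        funext j
        by_cases h : j = i0
        · subst h; exact hxx
        · exact congrFun (hxρ.trans hx'ρ.symm) ⟨j, h⟩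
    have hcore : ∀ y, ((Afin y).card : ℝ) ≤ d * (2 * B / (p : ℝ) ^ 2 + 1) := fun y =>
      hlp_core_count p hp d (gpoly y) (hgdeg y) m B hm0 hmB hB
    have hIcc : ((Finset.Icc (-m) m).card : ℝ) = 2 * (m : ℝ) + 1 := by
      rw [Int.card_Icc]
      have h1 : (0 : ℤ) ≤ m + 1 - -m := by omega
      have := Int.toNat_of_nonneg h1
      have h2 : (((m + 1 - -m).toNat : ℕ) : ℝ) = ((m + 1 - -m : ℤ) : ℝ) := by
        exact_mod_cast congrArg (fun z : ℤ => (z : ℝ)) this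
      rw [h2]; push_cast; ring
    have hsubcard : Fintype.card {j : Fin n // j ≠ i0} = n - 1 := by
      simp [Fintype.card_subtype_compl, Fintype.card_subtype_eq]
    have hYcard : ((Ybox.card : ℕ) : ℝ) ≤ (2 * B + 1) ^ (n - 1) := by
      rw [hY, Fintype.card_piFinset]
      rw [Finset.prod_const]
      push_cast
      rw [hIcc, Finset.card_univ, hsubcard]
      apply pow_le_pow_left₀ (by linarith) (by linarith)
    calc (T.card : ℝ)
        = ∑ y ∈ Ybox, ((T.filter fun x => ρ x = y).card : ℝ) := by exact_mod_cast hfib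
      _ ≤ ∑ y ∈ Ybox, ((Afin y).card : ℝ) :=
          Finset.sum_le_sum (fun y _ => by exact_mod_cast hfibcard y)
      _ ≤ Ybox.card • ((d : ℝ) * (2 * B / (p : ℝ) ^ 2 + 1)) :=
          Finset.sum_le_card_nsmul _ _ _ (fun y _ => hcore y)
      _ = (Ybox.card : ℝ) * ((d : ℝ) * (2 * B / (p : ℝ) ^ 2 + 1)) := nsmul_eq_mul _ _
      _ ≤ (2 * B + 1) ^ (n - 1) * ((d : ℝ) * (2 * B / (p : ℝ) ^ 2 + 1)) := by
          apply mul_le_mul_of_nonneg_right hYcard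
          exact mul_nonneg (Nat.cast_nonneg d) hr0
      _ = d * (2 * B + 1) ^ (n - 1) * (2 * B / (p : ℝ) ^ 2 + 1) := by ring
  exact key ⟨0, by omega⟩ hdeg
end
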